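/- Let $n \geq 1$ and let $r \in S_{2n+2}$ be the involution $i \mapsto 2n+3-i$. Then $W_{2n+2}$ is generated by the transpositions $(i\ i+2)$ for $1 \leq i \leq 2n$ together with $r$. -/

import Mathlib

/-- Indices `0,…,2n+1` of `Fin (2n+2)` correspond to the numbers `1,…,2n+2`;
`Bo` is the set corresponding to the odd numbers `1,3,…,2n+1`. -/
def Bo (n : ℕ) : Set (Fin (2*n+2)) := {x | (x : ℕ) % 2 = 0}

/-- `Be` is the set corresponding to the even numbers `2,4,…,2n+2`. -/
def Be (n : ℕ) : Set (Fin (2*n+2)) := {x | (x : ℕ) % 2 = 1}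

section aux

variable (n : ℕ)

/-- The generating set. -/
def Sgen : Set (Equiv.Perm (Fin (2*n+2))) :=
  ({τ | ∃ j : ℕ, ∃ h : j < 2*n,
      τ = Equiv.swap (⟨j, by linarith⟩ : Fin (2*n+2)) ⟨j+2, by linarith⟩}
    ∪ {(Fin.revPerm : Equiv.Perm (Fin (2*n+2)))})

/-- A parity-preserving permutation maps `Bo` onto `Bo`. -/
lemma image_Bo_of_parity {σ : Equiv.Perm (Fin (2*n+2))}
    (h : ∀ x : Fin (2*n+2), ((σ x : ℕ)) % 2 = (x : ℕ) % 2) :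
    ⇑σ '' Bo n = Bo n := by
  ext y
  constructor
  · rintro ⟨x, hx, rfl⟩
    simpa [Bo, h x] using hx
  · intro hy
    refine ⟨σ⁻¹ y, ?_, by simp⟩
    have := h (σ⁻¹ y)
    rw [show σ (σ⁻¹ y) = y from σ.apply_symm_apply y] at this
    simpa [Bo, this] using hy

/-- Conversely, if `σ '' Bo = Bo` then `σ` preserves parity. -/
lemma parity_of_image_Bo {σ : Equiv.Perm (Fin (2*n+2))}
    (h : ⇑σ '' Bo n = Bo n) :
    ∀ x : Fin (2*n+2), ((σ x : ℕ)) % 2 = (x : ℕ) % 2 := by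
  intro x
  by_cases hx : (x : ℕ) % 2 = 0
  · have : σ x ∈ Bo n := h ▸ ⟨x, hx, rfl⟩
    simpa [Bo, hx] using this
  · by_contra hc
    have h1 : (x : ℕ) % 2 = 1 := by omega
    have h2 : ((σ x : ℕ)) % 2 = 0 := by omega
    have : σ x ∈ ⇑σ '' Bo n := h.symm ▸ h2
    obtain ⟨y, hy, hyx⟩ := this
    have : y = x := σ.injective hyx
    subst this
    exact hx hy

lemma rev_parity (x : Fin (2*n+2)) :
    ((Fin.revPerm x : ℕ)) % 2 = 1 - (x : ℕ) % 2 := by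
  have hx : (x : ℕ) < 2*n+2 := x.isLt
  have : ((Fin.revPerm x : ℕ)) = 2*n+2 - ((x : ℕ) + 1) := rfl
  omega

/-- The given swaps and their consequences: any swap of same-parity indices
is in the closure of the generating set. -/
lemma swap_mem_closure (a b : Fin (2*n+2)) (hab : (a : ℕ) % 2 = (b : ℕ) % 2) :
    Equiv.swap a b ∈ Subgroup.closure (Sgen n) := by
  -- strong induction on the distance
  have key : ∀ d : ℕ, ∀ a b : Fin (2*n+2), (a : ℕ) % 2 = (b : ℕ) % 2 →
      (b : ℕ) - (a : ℕ) = d → (a : ℕ) ≤ (b : ℕ) →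
      Equiv.swap a b ∈ Subgroup.closure (Sgen n) := by
    intro d
    induction d using Nat.strong_induction_on with
    | _ d ih =>
      intro a b hab hd hle
      rcases Nat.eq_or_lt_of_le hle with heq | hlt
      · have : a = b := Fin.ext heq
        subst this
        simp [Equiv.swap_self]
        exact Subgroup.one_mem _
      · have hb2 : (a : ℕ) + 2 ≤ (b : ℕ) := by omega
        have ha2n : (a : ℕ) < 2*n := by have := b.isLt; omega
        set a' : Fin (2*n+2) := ⟨(a : ℕ) + 2, by omega⟩ with ha'
        have hgen : Equiv.swap a a' ∈ Subgroup.closure (Sgen n) := by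
          apply Subgroup.subset_closure
          left
          exact ⟨(a : ℕ), ha2n, by congr 1 <;> exact Fin.ext rfl⟩
        rcases Nat.eq_or_lt_of_le hb2 with heq2 | hlt2
        · have : a' = b := Fin.ext heq2
          rw [← this] at *
          exact hgen
        · -- swap a b = f * swap a' b * f⁻¹ with f = swap a a'
          have hfa' : (Equiv.swap a a') a' = a := Equiv.swap_apply_right a a'
          have hfb : (Equiv.swap a a') b = b := by
            apply Equiv.swap_apply_of_ne_of_ne
            · intro h; rw [h] at hlt; omega
            · intro h
              have : (b : ℕ) = (a : ℕ) + 2 := by rw [h]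
              omega
          have hconj : Equiv.swap a b =
              Equiv.swap a a' * Equiv.swap a' b * (Equiv.swap a a')⁻¹ := by
            rw [← Equiv.swap_apply_apply, hfa', hfb]
          rw [hconj]
          have hrec : Equiv.swap a' b ∈ Subgroup.closure (Sgen n) := by
            apply ih ((b : ℕ) - ((a : ℕ) + 2)) (by omega) a' b
            · simp [ha']; omega
            · simp [ha']
            · simp [ha']; omega
          exact Subgroup.mul_mem _ (Subgroup.mul_mem _ hgen hrec)
            (Subgroup.inv_mem _ hgen)
  rcases le_total (a : ℕ) (b : ℕ) with h | h
  · exact key _ a b hab rfl h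
  · rw [Equiv.swap_comm]
    exact key _ b a hab.symm rfl h

/-- Any permutation of a subtype defined by a parity condition, extended to
the whole type, lies in the closure. -/
lemma ofSubtype_mem_closure (k : ℕ)
    (π : Equiv.Perm {x : Fin (2*n+2) // (x : ℕ) % 2 = k}) :
    Equiv.Perm.ofSubtype π ∈ Subgroup.closure (Sgen n) := by
  refine Equiv.Perm.swap_induction_on π ?_ ?_
  · simp only [map_one]; exact Subgroup.one_mem _
  · intro f x y hxy ih
    rw [map_mul]
    refine Subgroup.mul_mem _ ?_ ih
    rw [Equiv.Perm.ofSubtype_swap_eq]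
    exact swap_mem_closure n _ _ (x.prop.trans y.prop.symm)

/-- A parity-preserving permutation lies in the closure. -/
lemma parity_mem_closure {σ : Equiv.Perm (Fin (2*n+2))}
    (h : ∀ x : Fin (2*n+2), ((σ x : ℕ)) % 2 = (x : ℕ) % 2) :
    σ ∈ Subgroup.closure (Sgen n) := by
  have hp : ∀ x : Fin (2*n+2), ((σ x : ℕ)) % 2 = 0 ↔ (x : ℕ) % 2 = 0 := by
    intro x; rw [h x]
  have hq : ∀ x : Fin (2*n+2), ((σ x : ℕ)) % 2 = 1 ↔ (x : ℕ) % 2 = 1 := by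
    intro x; rw [h x]
  have hdecomp : σ = Equiv.Perm.ofSubtype (σ.subtypePerm (p := fun y : Fin (2*n+2) => (y : ℕ) % 2 = 0) hp)
      * Equiv.Perm.ofSubtype (σ.subtypePerm (p := fun y : Fin (2*n+2) => (y : ℕ) % 2 = 1) hq) := by
    ext x
    by_cases hx : (x : ℕ) % 2 = 0
    · have hx1 : ¬ ((x : ℕ) % 2 = 1) := by omega
      simp only [Equiv.Perm.mul_apply]
      rw [Equiv.Perm.ofSubtype_apply_of_not_mem
          (p := fun y : Fin (2*n+2) => (y : ℕ) % 2 = 1) _ hx1,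
        Equiv.Perm.ofSubtype_apply_of_mem
          (p := fun y : Fin (2*n+2) => (y : ℕ) % 2 = 0) _ hx]
      rfl
    · have hx1 : (x : ℕ) % 2 = 1 := by omega
      simp only [Equiv.Perm.mul_apply]
      rw [Equiv.Perm.ofSubtype_apply_of_mem
          (p := fun y : Fin (2*n+2) => (y : ℕ) % 2 = 1) _ hx1]
      have : ((σ x : ℕ)) % 2 ≠ 0 := by rw [h x]; omega
      rw [show ((σ.subtypePerm (p := fun y : Fin (2*n+2) => (y : ℕ) % 2 = 1) hq) ⟨x, hx1⟩ : Fin (2*n+2)) = σ x from rfl,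
        Equiv.Perm.ofSubtype_apply_of_not_mem
          (p := fun y : Fin (2*n+2) => (y : ℕ) % 2 = 0) _ this]
  rw [hdecomp]
  exact Subgroup.mul_mem _ (ofSubtype_mem_closure n 0 _)
    (ofSubtype_mem_closure n 1 _)

end aux

theorem stmt8 (n : ℕ) (hn : 1 ≤ n)
    (W : Subgroup (Equiv.Perm (Fin (2*n+2))))
    (hW : ∀ σ, σ ∈ W ↔ (⇑σ '' Bo n = Bo n ∨ ⇑σ '' Bo n = Be n)) :
    W = Subgroup.closure
      ({τ | ∃ j : ℕ, ∃ h : j < 2*n,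
          τ = Equiv.swap (⟨j, by omega⟩ : Fin (2*n+2)) ⟨j+2, by omega⟩}
        ∪ {(Fin.revPerm : Equiv.Perm (Fin (2*n+2)))}) := by
  have hSgen : ({τ | ∃ j : ℕ, ∃ h : j < 2*n,
          τ = Equiv.swap (⟨j, by omega⟩ : Fin (2*n+2)) ⟨j+2, by omega⟩}
        ∪ {(Fin.revPerm : Equiv.Perm (Fin (2*n+2)))}) = Sgen n := rfl
  rw [hSgen]
  -- image of Bo under revPerm is Be
  have hrev_image : ⇑(Fin.revPerm : Equiv.Perm (Fin (2*n+2))) '' Bo n = Be n := by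
    ext y
    constructor
    · rintro ⟨x, hx, rfl⟩
      have := rev_parity n x
      simp only [Bo, Set.mem_setOf_eq] at hx
      simp only [Be, Set.mem_setOf_eq]
      omega
    · intro hy
      refine ⟨Fin.revPerm y, ?_, by simp⟩
      have := rev_parity n y
      simp only [Be, Set.mem_setOf_eq] at hy
      simp only [Bo, Set.mem_setOf_eq]
      omega
  apply le_antisymm
  · -- W ≤ closure
    intro σ hσ
    rcases (hW σ).mp hσ with h | h
    · exact parity_mem_closure n (parity_of_image_Bo n h)
    · -- revPerm * σ preserves parity
      have hrev_mem : (Fin.revPerm : Equiv.Perm (Fin (2*n+2)))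
          ∈ Subgroup.closure (Sgen n) :=
        Subgroup.subset_closure (Or.inr rfl)
      have hτ : ∀ x : Fin (2*n+2),
          (((Fin.revPerm * σ : Equiv.Perm (Fin (2*n+2))) x : ℕ)) % 2
            = (x : ℕ) % 2 := by
        intro x
        have hσx : ((σ x : ℕ)) % 2 = 1 - (x : ℕ) % 2 := by
          by_cases hx : (x : ℕ) % 2 = 0
          · have : σ x ∈ Be n := h ▸ ⟨x, hx, rfl⟩
            simp only [Be, Set.mem_setOf_eq] at this
            omega
          · have hx1 : (x : ℕ) % 2 = 1 := by omega
            by_contra hc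
            have h2 : ((σ x : ℕ)) % 2 = 1 := by omega
            have : σ x ∈ ⇑σ '' Bo n := h.symm ▸ h2
            obtain ⟨y, hy, hyx⟩ := this
            have : y = x := σ.injective hyx
            subst this
            simp only [Bo, Set.mem_setOf_eq] at hy
            omega
        have := rev_parity n (σ x)
        simp only [Equiv.Perm.mul_apply]
        have hlt : (x : ℕ) % 2 < 2 := Nat.mod_lt _ (by omega)
        omega
      have hτmem : (Fin.revPerm * σ : Equiv.Perm (Fin (2*n+2)))
          ∈ Subgroup.closure (Sgen n) := parity_mem_closure n hτ
      have : σ = (Fin.revPerm : Equiv.Perm (Fin (2*n+2)))⁻¹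
          * (Fin.revPerm * σ) := by group
      rw [this]
      exact Subgroup.mul_mem _ (Subgroup.inv_mem _ hrev_mem) hτmem
  · -- closure ≤ W
    rw [Subgroup.closure_le]
    rintro τ (⟨j, hj, rfl⟩ | hτ)
    · rw [SetLike.mem_coe, hW]
      left
      apply image_Bo_of_parity
      intro x
      by_cases h1 : x = (⟨j, by omega⟩ : Fin (2*n+2))
      · subst h1; rw [Equiv.swap_apply_left]; simp
      · by_cases h2 : x = (⟨j+2, by omega⟩ : Fin (2*n+2))
        · subst h2; rw [Equiv.swap_apply_right]; simp
        · rw [Equiv.swap_apply_of_ne_of_ne h1 h2]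
    · rw [Set.mem_singleton_iff] at hτ
      subst hτ
      rw [SetLike.mem_coe, hW]
      right
      exact hrev_image
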